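/- (Theorem 3, backward direction) For every positive natural number u all of whose prime factors are congruent to 2 modulo 3, the set {λ ∈ E₁ : |λ| = u/√3} has exactly 3 elements. -/

import Mathlib

noncomputable def ω : ℂ := (1 + Real.sqrt 3 * Complex.I) / 2

noncomputable def φ : ℂ := -(1 + ω) / 3

noncomputable def E (j : ℕ) : Set ℂ := {z | ∃ n m : ℤ, z = (n : ℂ) + (m : ℂ) * ω + (j : ℂ) * φ}


lemma inert_dvd (p : ℕ) (hp : p.Prime) (h2 : p % 3 = 2) (a b : ℤ)
    (h : (p:ℤ) ∣ a^2 + a*b + b^2) : (p:ℤ) ∣ a ∧ (p:ℤ) ∣ b := by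
  haveI := Fact.mk hp
  have h0 : (a : ZMod p)^2 + (a : ZMod p)*(b : ZMod p) + (b : ZMod p)^2 = 0 := by
    have := (ZMod.intCast_zmod_eq_zero_iff_dvd _ p).mpr h
    push_cast at this
    linear_combination this
  have hb : (b : ZMod p) = 0 := by
    by_contra hb
    set t : ZMod p := (a : ZMod p) * (b : ZMod p)⁻¹ with ht
    have htt : t^2 + t + 1 = 0 := by
      have hbi : (b : ZMod p) * (b : ZMod p)⁻¹ = 1 := ZMod.mul_inv_of_unit _ (Ne.isUnit hb)
      rw [ht]
      linear_combination ((b:ZMod p)⁻¹)^2 * h0 - ((a + b) * (b:ZMod p)⁻¹ + 1) * hbi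
    have ht3 : t^3 = 1 := by linear_combination (t - 1) * htt
    have ht1 : t ≠ 1 := by
      intro h1
      rw [h1] at htt
      have h3 : ((3:ℕ) : ZMod p) = 0 := by push_cast; linear_combination htt
      have hd := (ZMod.natCast_eq_zero_iff 3 p).mp h3
      have := (Nat.prime_dvd_prime_iff_eq hp (by norm_num)).mp hd
      omega
    have hord : orderOf t = 3 := orderOf_eq_prime ht3 ht1
    have hne : t ≠ 0 := by
      intro h0'
      rw [h0'] at ht3
      simp at ht3
    have hdvd : orderOf t ∣ p - 1 :=
      orderOf_dvd_of_pow_eq_one (ZMod.pow_card_sub_one_eq_one hne)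
    rw [hord] at hdvd
    have := hp.two_le
    omega
  rw [hb] at h0
  have ha : (a : ZMod p) = 0 := by
    have : (a : ZMod p)^2 = 0 := by linear_combination h0
    exact pow_eq_zero_iff (by norm_num) |>.mp this
  exact ⟨(ZMod.intCast_zmod_eq_zero_iff_dvd _ p).mp ha,
    (ZMod.intCast_zmod_eq_zero_iff_dvd _ p).mp hb⟩

lemma reps (u : ℕ) (hu : 0 < u) (hpr : ∀ p : ℕ, p.Prime → p ∣ u → p % 3 = 2)
    (a b : ℤ) (h : a^2 + a*b + b^2 = 3 * (u:ℤ)^2) :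
    (a = u ∧ b = u) ∨ (a = -u ∧ b = -u) ∨ (a = 2*u ∧ b = -u) ∨ (a = -2*u ∧ b = u)
      ∨ (a = u ∧ b = -2*u) ∨ (a = -u ∧ b = 2*u) := by
  induction u using Nat.strong_induction_on generalizing a b with
  | _ u ih =>
  rcases eq_or_lt_of_le (Nat.one_le_iff_ne_zero.mpr hu.ne') with h1 | h1
  · -- u = 1
    have hu1 : (u:ℤ) = 1 := by exact_mod_cast h1.symm
    rw [hu1] at h ⊢
    have hb2 : b^2 ≤ 4 := by nlinarith [sq_nonneg (2*a+b)]
    have ha2 : a^2 ≤ 4 := by nlinarith [sq_nonneg (a+2*b)]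
    have hb : -2 ≤ b ∧ b ≤ 2 := by constructor <;> nlinarith
    have ha : -2 ≤ a ∧ a ≤ 2 := by constructor <;> nlinarith
    obtain ⟨hb1, hb2'⟩ := hb; obtain ⟨ha1, ha2'⟩ := ha
    interval_cases a <;> interval_cases b <;> omega
  · -- u > 1
    set p := u.minFac with hpdef
    have hp : p.Prime := Nat.minFac_prime (by omega)
    have hpd : p ∣ u := Nat.minFac_dvd u
    have hp3 : p % 3 = 2 := hpr p hp hpd
    obtain ⟨v, hv⟩ := hpd
    have hpz : (p:ℤ) ∣ a^2 + a*b + b^2 := by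
      rw [h, hv]; push_cast; exact ⟨3 * p * v^2, by ring⟩
    obtain ⟨hda, hdb⟩ := inert_dvd p hp hp3 a b hpz
    obtain ⟨a', ha'⟩ := hda
    obtain ⟨b', hb'⟩ := hdb
    have hppos : 0 < p := hp.pos
    have hvpos : 0 < v := Nat.pos_of_ne_zero (fun h0 => by rw [h0, Nat.mul_zero] at hv; omega)
    have hvlt : v < u := by
      have := hp.two_le
      calc v = 1 * v := (one_mul v).symm
      _ < p * v := by have := hp.two_le; exact Nat.mul_lt_mul_of_lt_of_le (by omega) (le_refl v) hvpos
      _ = u := hv.symm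
    have hpr' : ∀ q : ℕ, q.Prime → q ∣ v → q % 3 = 2 := fun q hq hqd =>
      hpr q hq (hqd.trans ⟨p, by rw [hv]; ring⟩)
    have heq : a'^2 + a'*b' + b'^2 = 3 * (v:ℤ)^2 := by
      have hpne : (p:ℤ) ≠ 0 := by exact_mod_cast hppos.ne'
      have : (p:ℤ)^2 * (a'^2 + a'*b' + b'^2) = (p:ℤ)^2 * (3 * (v:ℤ)^2) := by
        rw [ha', hb'] at h
        have huv : (u:ℤ) = p * v := by exact_mod_cast hv
        rw [huv] at h
        linear_combination h
      exact mul_left_cancel₀ (pow_ne_zero 2 hpne) this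
    have huv : (u:ℤ) = p * v := by exact_mod_cast hv
    rcases ih v hvlt hvpos hpr' a' b' heq with
      ⟨h1', h2'⟩ | ⟨h1', h2'⟩ | ⟨h1', h2'⟩ | ⟨h1', h2'⟩ | ⟨h1', h2'⟩ | ⟨h1', h2'⟩
    · exact Or.inl ⟨by linear_combination ha' + (p:ℤ) * h1' - (1) * huv, by linear_combination hb' + (p:ℤ) * h2' - (1) * huv⟩
    · exact Or.inr (Or.inl ⟨by linear_combination ha' + (p:ℤ) * h1' - (-1) * huv, by linear_combination hb' + (p:ℤ) * h2' - (-1) * huv⟩)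
    · exact Or.inr (Or.inr (Or.inl ⟨by linear_combination ha' + (p:ℤ) * h1' - (2) * huv, by linear_combination hb' + (p:ℤ) * h2' - (-1) * huv⟩))
    · exact Or.inr (Or.inr (Or.inr (Or.inl ⟨by linear_combination ha' + (p:ℤ) * h1' - (-2) * huv, by linear_combination hb' + (p:ℤ) * h2' - (1) * huv⟩)))
    · exact Or.inr (Or.inr (Or.inr (Or.inr (Or.inl ⟨by linear_combination ha' + (p:ℤ) * h1' - (1) * huv, by linear_combination hb' + (p:ℤ) * h2' - (-2) * huv⟩))))
    · exact Or.inr (Or.inr (Or.inr (Or.inr (Or.inr (⟨by linear_combination ha' + (p:ℤ) * h1' - (-1) * huv, by linear_combination hb' + (p:ℤ) * h2' - (2) * huv⟩)))))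

lemma point_form (a b : ℤ) :
    ((a:ℂ) + b * ω) / 3 = Complex.mk ((a + b/2)/3) ((b * Real.sqrt 3/2)/3) := by
  apply Complex.ext <;> simp [ω, Complex.div_re, Complex.div_im, Complex.normSq] <;> ring

lemma normSq_point (a b : ℤ) :
    Complex.normSq (((a:ℂ) + b * ω) / 3) = ((a:ℝ)^2 + a*b + b^2) / 9 := by
  rw [point_form, Complex.normSq_mk]
  have h3 : Real.sqrt 3 ^ 2 = 3 := Real.sq_sqrt (by norm_num)
  nlinarith [h3]

lemma abs_point_iff (a b : ℤ) (u : ℕ) (hu : 0 < u) :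
    ‖((a:ℂ) + b * ω) / 3‖ = (u:ℝ) / Real.sqrt 3 ↔
      a^2 + a*b + b^2 = 3 * (u:ℤ)^2 := by
  have hs : (0:ℝ) < Real.sqrt 3 := Real.sqrt_pos.mpr (by norm_num)
  have h3 : Real.sqrt 3 ^ 2 = 3 := Real.sq_sqrt (by norm_num)
  constructor
  · intro h
    have h2 : Complex.normSq (((a:ℂ) + b * ω) / 3) = ((u:ℝ) / Real.sqrt 3)^2 := by
      rw [← Complex.sq_norm, h]
    rw [normSq_point, div_pow] at h2
    have : ((a:ℝ)^2 + a*b + b^2) = 3 * (u:ℝ)^2 := by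
      field_simp at h2
      nlinarith [h2]
    exact_mod_cast this
  · intro h
    have h2 : ((a:ℝ)^2 + a*b + b^2) = 3 * (u:ℝ)^2 := by exact_mod_cast h
    have habs : ‖((a:ℂ) + b * ω) / 3‖ ^ 2 = ((u:ℝ) / Real.sqrt 3)^2 := by
      rw [Complex.sq_norm, normSq_point, h2, div_pow]
      field_simp
      nlinarith [h3]
    have h1 : (0:ℝ) ≤ ‖((a:ℂ) + b * ω) / 3‖ := norm_nonneg _
    have h2' : (0:ℝ) ≤ (u:ℝ) / Real.sqrt 3 := by positivity
    nlinarith [habs, h1, h2']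

lemma point_inj (a b a' b' : ℤ) (h : ((a:ℂ) + b * ω)/3 = ((a':ℂ) + b' * ω)/3) :
    a = a' ∧ b = b' := by
  rw [point_form, point_form, Complex.ext_iff] at h
  obtain ⟨hre, him⟩ := h
  simp only at hre him
  have hs : (0:ℝ) < Real.sqrt 3 := Real.sqrt_pos.mpr (by norm_num)
  have hb : (b:ℝ) = b' := by
    have hz : ((b:ℝ) - b') * Real.sqrt 3 = 0 := by linarith
    rcases mul_eq_zero.mp hz with h | h
    · linarith
    · exact absurd h hs.ne'
  have hb' : b = b' := by exact_mod_cast hb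
  have ha : (a:ℝ) = a' := by field_simp at hre; linarith [hre, hb]
  exact ⟨by exact_mod_cast ha, hb'⟩

noncomputable def P (a b : ℤ) : ℂ := ((a:ℂ) + (b:ℂ) * ω) / 3

lemma mem_E1 (a b : ℤ) (ha : a % 3 = 2) (hb : b % 3 = 2) : P a b ∈ E 1 := by
  obtain ⟨n, hn⟩ : ∃ n : ℤ, 3 * n = a + 1 := ⟨(a+1)/3, by omega⟩
  obtain ⟨m, hm⟩ : ∃ m : ℤ, 3 * m = b + 1 := ⟨(b+1)/3, by omega⟩
  refine ⟨n, m, ?_⟩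
  have hac : (a:ℂ) = 3*n - 1 := by exact_mod_cast congrArg (fun x : ℤ => (x:ℂ)) (by omega : a = 3*n-1)
  have hbc : (b:ℂ) = 3*m - 1 := by exact_mod_cast congrArg (fun x : ℤ => (x:ℂ)) (by omega : b = 3*m-1)
  simp only [P, φ, hac, hbc]
  push_cast
  ring

lemma E1_form (z : ℂ) (hz : z ∈ E 1) : ∃ a b : ℤ, a % 3 = 2 ∧ b % 3 = 2 ∧ z = P a b := by
  obtain ⟨n, m, rfl⟩ := hz
  refine ⟨3*n - 1, 3*m - 1, by omega, by omega, ?_⟩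
  simp only [P, φ]
  push_cast
  ring

theorem magic_lengths_backward (u : ℕ) (hu : 0 < u)
    (hprime : ∀ p : ℕ, p.Prime → p ∣ u → p % 3 = 2) :
    Set.ncard {z ∈ E 1 | ‖z‖ = (u : ℝ) / Real.sqrt 3} = 3 := by
  have h3u : u % 3 = 1 ∨ u % 3 = 2 := by
    have hnd : ¬ (3 ∣ u) := fun hd => by have := hprime 3 (by norm_num) hd; omega
    omega
  obtain ⟨e, he1, he2⟩ : ∃ e : ℤ, (e = 1 ∨ e = -1) ∧ (e * u) % 3 = 2 := by
    rcases h3u with h | h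
    · exact ⟨-1, Or.inr rfl, by omega⟩
    · exact ⟨1, Or.inl rfl, by omega⟩
  have habsP : ∀ a b : ℤ, ‖P a b‖ = (u:ℝ) / Real.sqrt 3 ↔
      a^2 + a*b + b^2 = 3 * (u:ℤ)^2 := fun a b => abs_point_iff a b u hu
  have hPinj : ∀ a b a' b' : ℤ, P a b = P a' b' → a = a' ∧ b = b' :=
    fun a b a' b' h => point_inj a b a' b' h
  have hset : {z ∈ E 1 | ‖z‖ = (u : ℝ) / Real.sqrt 3} =
      {P (e*u) (e*u), P (-2*e*u) (e*u), P (e*u) (-2*e*u)} := by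
    ext z
    simp only [Set.mem_setOf_eq, Set.mem_insert_iff, Set.mem_singleton_iff]
    constructor
    · rintro ⟨hzE, habs⟩
      obtain ⟨a, b, ha3, hb3, rfl⟩ := E1_form z hzE
      have heq := (habsP a b).mp habs
      rcases reps u hu hprime a b heq with
        ⟨h1', h2'⟩ | ⟨h1', h2'⟩ | ⟨h1', h2'⟩ | ⟨h1', h2'⟩ | ⟨h1', h2'⟩ | ⟨h1', h2'⟩
      · rcases he1 with rfl | rfl
        · left; rw [h1', h2']; norm_num
        · exfalso; omega
      · rcases he1 with rfl | rfl
        · exfalso; omega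
        · left; rw [h1', h2']; norm_num
      · rcases he1 with rfl | rfl
        · exfalso; omega
        · right; left; rw [h1', h2']; norm_num
      · rcases he1 with rfl | rfl
        · right; left; rw [h1', h2']; norm_num
        · exfalso; omega
      · rcases he1 with rfl | rfl
        · right; right; rw [h1', h2']; norm_num
        · exfalso; omega
      · rcases he1 with rfl | rfl
        · exfalso; omega
        · right; right; rw [h1', h2']; norm_num
    · have hm1 : (e*u) % 3 = 2 := he2
      have hm2 : (-2*e*u) % 3 = 2 := by rcases he1 with rfl | rfl <;> omega
      rintro (rfl | rfl | rfl)
      · exact ⟨mem_E1 _ _ hm1 hm1, (habsP _ _).mpr (by rcases he1 with rfl | rfl <;> ring)⟩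
      · exact ⟨mem_E1 _ _ hm2 hm1, (habsP _ _).mpr (by rcases he1 with rfl | rfl <;> ring)⟩
      · exact ⟨mem_E1 _ _ hm1 hm2, (habsP _ _).mpr (by rcases he1 with rfl | rfl <;> ring)⟩
  rw [hset]
  have d12 : P (e*u) (e*u) ≠ P (-2*e*u) (e*u) := by
    intro h
    obtain ⟨h1, -⟩ := hPinj _ _ _ _ h
    rcases he1 with rfl | rfl <;> omega
  have d13 : P (e*u) (e*u) ≠ P (e*u) (-2*e*u) := by
    intro h
    obtain ⟨-, h2⟩ := hPinj _ _ _ _ h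
    rcases he1 with rfl | rfl <;> omega
  have d23 : P (-2*e*u) (e*u) ≠ P (e*u) (-2*e*u) := by
    intro h
    obtain ⟨h1, -⟩ := hPinj _ _ _ _ h
    rcases he1 with rfl | rfl <;> omega
  rw [Set.ncard_insert_of_notMem (by
    intro hmem
    simp only [Set.mem_insert_iff, Set.mem_singleton_iff] at hmem
    rcases hmem with h | h
    exacts [d12 h, d13 h]), Set.ncard_pair d23]
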